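/- arXiv:0906.2729 — 2 statements merged into one kernel-verified Lean document; each statement's English description precedes it below -/
import Mathlib

section
/- Let L = (α_{kj})_{1≤k,j≤n} be an n×n integer matrix with det L ≠ 0, let a = (a₁,…,a_n) ∈ (ℂ*)ⁿ, and let f(z) = 1 + Σ_{k=1}^n a_k ∏_{j=1}^n z_j^{α_{kj}}. Then the lifted coamoeba of V_f is the affine preimage of the lifted coamoeba of the standard hyperplane P₁ = {w ∈ (ℂ*)ⁿ : 1 + w₁ + ⋯ + w_n = 0}: co𝒜_f = { x ∈ ℝⁿ : the vector with k-th coordinate Σ_{j=1}^n α_{kj} x_j + arg(a_k) lies in co𝒜_{P₁} }. (Lemma 3.3(ii).) -/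
open Complex

lemma exists_im_eq_arg_exp (t : ℂ) :
    ∃ m : ℤ, t.im = (Complex.exp t).arg + 2 * Real.pi * m := by
  obtain ⟨m, hm⟩ := (Complex.exp_eq_exp_iff_exists_int).1
    (Complex.exp_log (Complex.exp_ne_zero t))
  refine ⟨-m, ?_⟩
  have h2 := congrArg Complex.im hm
  simp [Complex.log_im] at h2
  push_cast
  linarith [h2]

/-- **Lemma 3.3(ii)** (first part). For `f(z) = 1 + Σ_k a_k z^{α_k}` with invertible
integer exponent matrix `L`, the lifted coamoeba of `V_f` is the preimage of the
lifted coamoeba of the standard hyperplane `P₁` under the affine map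
`x ↦ (Σ_j α_{kj} x_j + arg(a_k))_k`. -/
theorem coamoeba_simplex_eq_affine_preimage
    (n : ℕ) (L : Matrix (Fin n) (Fin n) ℤ) (hL : L.det ≠ 0)
    (a : Fin n → ℂ) (ha : ∀ k, a k ≠ 0)
    (coAmoebaf : Set (Fin n → ℝ))
    (hcoAmoebaf : coAmoebaf = {x : Fin n → ℝ | ∃ z : Fin n → ℂ,
      (∀ j, z j ≠ 0) ∧ 1 + ∑ k, a k * ∏ j, z j ^ (L k j) = 0 ∧
      ∀ j, ∃ m : ℤ, x j = (z j).arg + 2 * Real.pi * m})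
    (coAmoebaP1 : Set (Fin n → ℝ))
    (hcoAmoebaP1 : coAmoebaP1 = {y : Fin n → ℝ | ∃ w : Fin n → ℂ,
      (∀ k, w k ≠ 0) ∧ 1 + ∑ k, w k = 0 ∧
      ∀ k, ∃ m : ℤ, y k = (w k).arg + 2 * Real.pi * m}) :
    coAmoebaf = {x : Fin n → ℝ |
      (fun k => (∑ j, (L k j : ℝ) * x j) + (a k).arg) ∈ coAmoebaP1} := by
  subst hcoAmoebaf hcoAmoebaP1
  ext x
  simp only [Set.mem_setOf_eq]
  constructor
  · rintro ⟨z, hz0, hzsum, hzarg⟩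
    choose m hm using hzarg
    refine ⟨fun k => a k * ∏ j, z j ^ (L k j), fun k =>
      mul_ne_zero (ha k) (Finset.prod_ne_zero_iff.2 fun j _ => zpow_ne_zero _ (hz0 j)),
      hzsum, fun k => ?_⟩
    set t : Fin n → ℂ := fun j => Complex.log (z j) with ht
    have hprod : ∏ j, z j ^ (L k j) = Complex.exp (∑ j, (L k j : ℂ) * t j) := by
      rw [Complex.exp_sum]
      refine Finset.prod_congr rfl fun j _ => ?_
      rw [ht]
      rw [Complex.exp_int_mul, Complex.exp_log (hz0 j)]
    have hw : a k * ∏ j, z j ^ (L k j)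
        = Complex.exp (Complex.log (a k) + ∑ j, (L k j : ℂ) * t j) := by
      rw [Complex.exp_add, Complex.exp_log (ha k), hprod]
    obtain ⟨M, hM⟩ := exists_im_eq_arg_exp (Complex.log (a k) + ∑ j, (L k j : ℂ) * t j)
    refine ⟨M + ∑ j, L k j * m j, ?_⟩
    dsimp only
    rw [hw]
    have him : (Complex.log (a k) + ∑ j, (L k j : ℂ) * t j).im
        = (a k).arg + ∑ j, (L k j : ℝ) * (z j).arg := by
      simp [Complex.add_im, Complex.im_sum, Complex.mul_im, Complex.log_im, ht]
    rw [him] at hM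
    have hx : ∑ j, (L k j : ℝ) * x j
        = (∑ j, (L k j : ℝ) * (z j).arg) + 2 * Real.pi * ∑ j, (L k j : ℝ) * m j := by
      rw [Finset.mul_sum, ← Finset.sum_add_distrib]
      refine Finset.sum_congr rfl fun j _ => ?_
      rw [hm j]; ring
    rw [hx]
    push_cast
    linarith [hM]
  · rintro ⟨w, hw0, hwsum, hwarg⟩
    choose m hm using hwarg
    set Lr : Matrix (Fin n) (Fin n) ℝ := L.map (Int.cast) with hLr
    have hdet : Lr.det ≠ 0 := by
      have h : Lr = (Int.castRingHom ℝ).mapMatrix L := rfl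
      rw [h, ← RingHom.map_det]
      simpa using (Int.cast_ne_zero (α := ℝ)).2 hL
    set c : Fin n → ℝ := fun k => (Complex.log (w k / a k)).re with hc
    set ρ : Fin n → ℝ := Lr⁻¹.mulVec c with hρdef
    have hρ : Lr.mulVec ρ = c := by
      rw [hρdef, Matrix.mulVec_mulVec, Matrix.mul_nonsing_inv _ (isUnit_iff_ne_zero.2 hdet),
        Matrix.one_mulVec]
    set z : Fin n → ℂ := fun j => Complex.exp (ρ j + x j * I) with hz
    have hz0 : ∀ j, z j ≠ 0 := fun j => Complex.exp_ne_zero _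
    have key : ∀ k, a k * ∏ j, z j ^ (L k j) = w k := by
      intro k
      have hprod : ∏ j, z j ^ (L k j)
          = Complex.exp (∑ j, (L k j : ℂ) * (ρ j + x j * I)) := by
        rw [Complex.exp_sum]
        exact Finset.prod_congr rfl fun j _ => by rw [hz, Complex.exp_int_mul]
      have hre : (∑ j, (L k j : ℂ) * (ρ j + x j * I))
          = (c k : ℂ) + (∑ j, (L k j : ℝ) * x j : ℝ) * I := by
        have h1 : c k = ∑ j, (L k j : ℝ) * ρ j := by
          rw [← hρ]; simp [Matrix.mulVec, dotProduct, hLr]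
        rw [h1]
        push_cast
        rw [Finset.sum_mul, ← Finset.sum_add_distrib]
        exact Finset.sum_congr rfl fun j _ => by ring
      obtain ⟨M, hM⟩ := exists_im_eq_arg_exp (Complex.log (w k) - Complex.log (a k))
      have hexp : Complex.exp (Complex.log (w k) - Complex.log (a k)) = w k / a k := by
        rw [Complex.exp_sub, Complex.exp_log (hw0 k), Complex.exp_log (ha k)]
      rw [hexp] at hM
      simp [Complex.log_im] at hM
      have hsum : (∑ j, (L k j : ℝ) * x j) = (Complex.log (w k / a k)).im
          + 2 * Real.pi * (m k + M) := by
        have := hm k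
        rw [Complex.log_im]
        linarith
      rw [hprod, hre, hsum]
      have heq : ((c k : ℂ)) + ((((Complex.log (w k / a k)).im
            + 2 * Real.pi * (m k + M) : ℝ)) : ℂ) * I
          = Complex.log (w k / a k) + ((m k + M : ℤ) : ℂ) * (2 * Real.pi * I) := by
        apply Complex.ext
        · push_cast
          simp [hc]
        · simp
          ring
      rw [heq, Complex.exp_add, Complex.exp_log (div_ne_zero (hw0 k) (ha k)),
        Complex.exp_int_mul_two_pi_mul_I, mul_one]
      exact mul_div_cancel₀ (w k) (ha k)
    refine ⟨z, hz0, ?_, fun j => ?_⟩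
    · rw [Finset.sum_congr rfl fun k _ => key k]
      exact hwsum
    · obtain ⟨M, hM⟩ := exists_im_eq_arg_exp (ρ j + x j * I)
      refine ⟨M, ?_⟩
      simpa using hM
end

section
/- Let N ≥ 2, let r₁,…,r_N ∈ ℂ \ {0} with 0 < |r₁| < |r₂| < ⋯ < |r_N|, and let f(z) = ∏_{j=1}^N (z − r_j). Fix an integer k with 0 < k < N, let 𝔸 = {z ∈ ℂ : |r_k| < |z| < |r_{k+1}|}, and let g be any holomorphic function on 𝔸 with exp(g(z)) = f(z)/z^k for all z ∈ 𝔸. Then for every ρ with |r_k| < ρ < |r_{k+1}|, the imaginary part of (1/(2πi)) ∮_{|z|=ρ} g(z) dz/z is congruent modulo 2π to (1 + (−1)^{N−k+1})·(π/2) + Σ_{j=k+1}^N arg(r_j), i.e. to Σ_{j=k+1}^N (π + arg(r_j)). (Example 5.5, formula (2).) -/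
open Complex Metric

section helpers

lemma one_sub_slit {w : ℂ} (h : ‖w‖ < 1) : (1 - w) ∈ Complex.slitPlane := by
  rw [Complex.mem_slitPlane_iff]
  left
  simp only [Complex.sub_re, Complex.one_re]
  have := Complex.re_le_norm w
  linarith

lemma one_sub_ne {w : ℂ} (h : ‖w‖ < 1) : (1 - w) ≠ 0 :=
  Complex.slitPlane_ne_zero (one_sub_slit h)

lemma int_valued_const {s : Set ℂ} (hs : IsPreconnected s) {q : ℂ → ℝ}
    (hq : ContinuousOn q s) (hint : ∀ z ∈ s, ∃ n : ℤ, q z = n) {x y : ℂ}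
    (hx : x ∈ s) (hy : y ∈ s) : q x = q y := by
  by_contra hne
  have key : ∀ u v : ℂ, u ∈ s → v ∈ s → q u < q v → False := by
    intro u v hu hv hlt
    rcases hint u hu with ⟨nu, hnu⟩
    rcases hint v hv with ⟨nv, hnv⟩
    have hnuv : nu < nv := by
      have := hlt; rw [hnu, hnv] at this; exact_mod_cast this
    have ht : (nu : ℝ) + 1/2 ∈ Set.Icc (q u) (q v) := by
      constructor
      · rw [hnu]; linarith
      · rw [hnv]
        have : (nu : ℝ) + 1 ≤ nv := by exact_mod_cast hnuv
        linarith
    obtain ⟨w, hw, hqw⟩ := hs.intermediate_value hu hv hq ht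
    rcases hint w hw with ⟨nw, hnw⟩
    rw [hnw] at hqw
    have h1 : Int.fract ((nw : ℝ)) = 0 := Int.fract_intCast nw
    rw [hqw, Int.fract_intCast_add] at h1
    norm_num [Int.fract] at h1
  rcases lt_or_gt_of_ne hne with hlt | hlt
  · exact key x y hx hy hlt
  · exact key y x hy hx hlt

lemma arg_neg_eq {x : ℂ} (hx : x ≠ 0) :
    ∃ m : ℤ, Complex.arg (-x) = Real.pi + Complex.arg x + 2 * Real.pi * m := by
  have h := Complex.arg_neg_coe_angle hx
  have h2 : ((Complex.arg (-x) : ℝ) : Real.Angle)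
      = ((Complex.arg x + Real.pi : ℝ) : Real.Angle) := by
    rw [h, Real.Angle.coe_add]
  rw [Real.Angle.angle_eq_iff_two_pi_dvd_sub] at h2
  obtain ⟨m, hm⟩ := h2
  exact ⟨m, by linarith⟩

lemma circleIntegral_finset_sum {ι : Type*} (s : Finset ι) (f : ι → ℂ → ℂ) {c : ℂ} {R : ℝ}
    (hf : ∀ j ∈ s, CircleIntegrable (f j) c R) :
    (∮ z in C(c, R), ∑ j ∈ s, f j z) = ∑ j ∈ s, ∮ z in C(c, R), f j z := by
  simp only [circleIntegral]
  rw [← intervalIntegral.integral_finset_sum (fun j hj => ((circleIntegrable_iff R).mp (hf j hj)))]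
  simp only [Finset.smul_sum]

lemma circleIntegral_add' {f g : ℂ → ℂ} {c : ℂ} {R : ℝ} (hf : CircleIntegrable f c R)
    (hg : CircleIntegrable g c R) :
    (∮ z in C(c, R), (f z + g z)) = (∮ z in C(c, R), f z) + ∮ z in C(c, R), g z := by
  simp only [circleIntegral, smul_add, intervalIntegral.integral_add hf.out hg.out]

lemma circleIntegral_const_div {C : ℂ} {ρ : ℝ} (h0 : 0 < ρ) :
    (∮ z in C(0, ρ), C / z) = C * (2 * Real.pi * I) := by
  have h1 := circleIntegral.integral_sub_inv_of_mem_ball (c := (0:ℂ)) (w := 0) (R := ρ)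
    (by simpa using h0)
  have h2 : (∮ z in C(0, ρ), C / z) = ∮ z in C(0, ρ), C • (z - 0)⁻¹ := by
    refine circleIntegral.integral_congr h0.le fun z hz => ?_
    simp [div_eq_mul_inv]
  rw [h2, circleIntegral.integral_smul, h1, smul_eq_mul]


lemma mean_zero {a : ℂ} {ρ : ℝ} (h0 : 0 < ρ) (h : ρ < ‖a‖) :
    (∮ z in C(0, ρ), Complex.log (1 - z / a) / z) = 0 := by
  have ha : a ≠ 0 := by
    intro h'; rw [h'] at h; simp at h; linarith
  have hslit : ∀ z ∈ closedBall (0:ℂ) ρ, (1 - z / a) ∈ Complex.slitPlane := by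
    intro z hz
    rw [Complex.mem_slitPlane_iff]
    left
    simp only [Complex.sub_re, Complex.one_re]
    have h1 : ‖z / a‖ < 1 := by
      rw [norm_div, div_lt_one (h0.trans h)]
      calc ‖z‖ ≤ ρ := by simpa using hz
        _ < ‖a‖ := h
    have := Complex.re_le_norm (z / a)
    linarith
  have hd : DifferentiableOn ℂ (fun z => Complex.log (1 - z / a)) (closedBall (0:ℂ) ρ) := by
    intro z hz
    refine DifferentiableAt.differentiableWithinAt ?_
    exact (Complex.differentiableAt_log (hslit z hz)).comp z (f := fun z => 1 - z / a)
      (by fun_prop)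
  have hdc : DiffContOnCl ℂ (fun z => Complex.log (1 - z / a)) (ball (0:ℂ) ρ) :=
    ⟨hd.mono ball_subset_closedBall, by
      rw [closure_ball (0:ℂ) h0.ne']; exact hd.continuousOn⟩
  have key := DiffContOnCl.circleIntegral_sub_inv_smul (f := fun z => Complex.log (1 - z / a)) hdc (mem_ball_self h0)
  have heq : (∮ z in C(0, ρ), Complex.log (1 - z / a) / z)
      = ∮ z in C(0, ρ), (z - 0)⁻¹ • Complex.log (1 - z / a) :=
    circleIntegral.integral_congr h0.le fun z hz => by simp [div_eq_inv_mul]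
  rw [heq, key]
  simp


lemma mean_zero' {a : ℂ} {ρ : ℝ} (h0 : 0 < ρ) (ha : a ≠ 0) (h : ‖a‖ < ρ) :
    (∮ z in C(0, ρ), Complex.log (1 - a / z) / z) = 0 := by
  have hρne : (ρ : ℂ) ≠ 0 := by exact_mod_cast h0.ne'
  set b : ℂ := (ρ : ℂ) / a with hbdef
  have hb : (1 : ℝ) < ‖b‖ := by
    rw [hbdef, norm_div, Complex.norm_real, Real.norm_eq_abs, abs_of_pos h0, lt_div_iff₀ (norm_pos_iff.mpr ha)]
    simpa using h
  set v : ℂ → ℂ := fun ζ => Complex.log (1 - ζ / b) with hvdef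
  have key : ∀ w : ℂ, w ≠ 0 → a / ((ρ:ℂ) * w) = w⁻¹ / b := by
    intro w hw
    rw [hbdef]
    field_simp
  have e1 : (∮ z in C(0, ρ), Complex.log (1 - a / z) / z)
      = ∫ θ in (0:ℝ)..2 * Real.pi, I * v (Complex.exp (-(θ * I))) := by
    simp only [circleIntegral, deriv_circleMap, smul_eq_mul]
    refine intervalIntegral.integral_congr fun θ _ => ?_
    have hc : circleMap 0 ρ θ ≠ 0 := by
      simpa using circleMap_ne_center (c := (0:ℂ)) h0.ne' (θ := θ)
    have h2 : a / circleMap 0 ρ θ = Complex.exp (-(θ * I)) / b := by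
      rw [circleMap_zero, key _ (Complex.exp_ne_zero _), Complex.exp_neg]
    rw [circleMap_zero] at hc h2 ⊢
    rw [h2]
    simp only [hvdef]
    field_simp
  have e2 : (∫ θ in (0:ℝ)..2 * Real.pi, I * v (Complex.exp (-(θ * I))))
      = ∫ θ in (0:ℝ)..2 * Real.pi, I * v (Complex.exp (θ * I)) := by
    have h3 := intervalIntegral.integral_comp_sub_left (a := 0) (b := 2 * Real.pi)
      (fun θ : ℝ => I * v (Complex.exp (θ * I))) (2 * Real.pi)
    simp only [sub_self, sub_zero] at h3
    rw [← h3]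
    refine intervalIntegral.integral_congr fun θ _ => ?_
    have h4 : ((2 * Real.pi - θ : ℝ) : ℂ) * I = -(θ * I) + 2 * Real.pi * I := by
      push_cast; ring
    simp only [h4, Complex.exp_add, Complex.exp_two_pi_mul_I, mul_one]
  have e3 : (∫ θ in (0:ℝ)..2 * Real.pi, I * v (Complex.exp (θ * I)))
      = ∮ z in C(0, 1), v z / z := by
    simp only [circleIntegral, deriv_circleMap, smul_eq_mul]
    refine (intervalIntegral.integral_congr fun θ _ => ?_).symm
    have hc : circleMap 0 1 θ ≠ 0 := by
      simpa using circleMap_ne_center (c := (0:ℂ)) one_ne_zero (θ := θ)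
    rw [circleMap_zero] at hc ⊢
    simp only [Complex.ofReal_one, one_mul] at hc ⊢
    field_simp
  have e4 : (∮ z in C(0, 1), v z / z) = 0 := by
    rw [hvdef]
    exact mean_zero one_pos hb
  rw [e1, e2, e3, e4]

end helpers

/-- **Example 5.5, formula (2).** Let `f(z) = ∏_{j=1}^N (z − r_j)` with
`0 < |r₁| < ⋯ < |r_N|`, let `0 < k < N`, and let `g` be a holomorphic logarithm of
`f(z)/z^k` on the annulus `|r_k| < |z| < |r_{k+1}|`. Then for every radius `ρ` in
this range, the imaginary part of `(1/(2πi)) ∮_{|z|=ρ} g(z) dz/z` is congruent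
modulo `2π` to `Σ_{j=k+1}^N (π + arg(r_j))`. -/
theorem imaginary_part_of_log_mean_on_annulus
    (N : ℕ) (hN : 2 ≤ N) (r : ℕ → ℂ)
    (hr0 : 0 < ‖r 1‖)
    (hrne : ∀ j, 1 ≤ j → j ≤ N → r j ≠ 0)
    (hrlt : ∀ j, 1 ≤ j → j < N → ‖r j‖ < ‖r (j + 1)‖)
    (k : ℕ) (hk0 : 0 < k) (hkN : k < N)
    (g : ℂ → ℂ)
    (hg : DifferentiableOn ℂ g
      {z : ℂ | ‖r k‖ < ‖z‖ ∧ ‖z‖ < ‖r (k + 1)‖})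
    (hgexp : ∀ z ∈ {z : ℂ | ‖r k‖ < ‖z‖ ∧
        ‖z‖ < ‖r (k + 1)‖},
      Complex.exp (g z) = (∏ j ∈ Finset.Icc 1 N, (z - r j)) / z ^ k)
    (ρ : ℝ) (hρ1 : ‖r k‖ < ρ) (hρ2 : ρ < ‖r (k + 1)‖) :
    ∃ m : ℤ,
      ((1 / (2 * (Real.pi : ℂ) * Complex.I)) * (∮ z in C(0, ρ), g z / z)).im
        = (∑ j ∈ Finset.Icc (k + 1) N, (Real.pi + (r j).arg)) + 2 * Real.pi * m := by
  have hk1 : 1 ≤ k := hk0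
  have hρ0 : 0 < ρ := lt_of_le_of_lt (norm_nonneg _) hρ1
  -- monotonicity of |r j|
  have hmono : ∀ i j, 1 ≤ i → i ≤ j → j ≤ N → ‖r i‖ ≤ ‖r j‖ := by
    intro i j h1 hij hjN
    induction j with
    | zero => omega
    | succ n ih =>
      rcases eq_or_lt_of_le hij with h | h
      · rw [h]
      · have hin : i ≤ n := by omega
        have h2 := ih hin (by omega)
        exact h2.trans (hrlt n (by omega) (by omega)).le
  -- sphere is inside annulus
  have habs : ∀ z ∈ sphere (0 : ℂ) ρ, ‖z‖ = ρ := by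
    intro z hz
    simpa using mem_sphere_zero_iff_norm.mp hz
  have hsub : ∀ z ∈ sphere (0 : ℂ) ρ,
      ‖r k‖ < ‖z‖ ∧ ‖z‖ < ‖r (k + 1)‖ := by
    intro z hz
    rw [habs z hz]
    exact ⟨hρ1, hρ2⟩
  have hz0 : ∀ z ∈ sphere (0 : ℂ) ρ, z ≠ 0 := by
    intro z hz h0
    rw [h0] at hz
    have := habs 0 hz
    simp at this
    linarith
  -- factor size facts on the sphere
  have hfac1 : ∀ z ∈ sphere (0 : ℂ) ρ, ∀ j ∈ Finset.Icc 1 k, ‖r j / z‖ < 1 := by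
    intro z hz j hj
    obtain ⟨h1, h2⟩ := Finset.mem_Icc.mp hj
    rw [norm_div, habs z hz, div_lt_one hρ0]
    exact lt_of_le_of_lt (hmono j k h1 h2 hkN.le) hρ1
  have hfac2 : ∀ z ∈ sphere (0 : ℂ) ρ, ∀ j ∈ Finset.Icc (k + 1) N, ‖z / r j‖ < 1 := by
    intro z hz j hj
    obtain ⟨h1, h2⟩ := Finset.mem_Icc.mp hj
    have hrj : 0 < ‖r j‖ :=
      lt_trans (lt_of_le_of_lt (norm_nonneg _) hρ1)
        (lt_of_lt_of_le hρ2 (hmono (k + 1) j (by omega) h1 h2))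
    rw [norm_div, habs z hz, div_lt_one hrj]
    exact lt_of_lt_of_le hρ2 (hmono (k + 1) j (by omega) h1 h2)
  have hrne2 : ∀ j ∈ Finset.Icc (k + 1) N, r j ≠ 0 := by
    intro j hj
    obtain ⟨h1, h2⟩ := Finset.mem_Icc.mp hj
    exact hrne j (by omega) h2
  -- the explicit logarithm
  set h : ℂ → ℂ := fun z =>
    (∑ j ∈ Finset.Icc 1 k, Complex.log (1 - r j / z))
      + ∑ j ∈ Finset.Icc (k + 1) N, Complex.log (1 - z / r j) with hhdef
  set c : ℂ := ∑ j ∈ Finset.Icc (k + 1) N, Complex.log (-r j) with hcdef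
  -- exp identity on the sphere
  have hexp : ∀ z ∈ sphere (0 : ℂ) ρ, Complex.exp (h z + c)
      = (∏ j ∈ Finset.Icc 1 N, (z - r j)) / z ^ k := by
    intro z hz
    have hz' := hz0 z hz
    rw [hhdef, hcdef]
    simp only []
    rw [Complex.exp_add, Complex.exp_add, Complex.exp_sum, Complex.exp_sum, Complex.exp_sum]
    have p1 : ∀ j ∈ Finset.Icc 1 k, Complex.exp (Complex.log (1 - r j / z)) = 1 - r j / z :=
      fun j hj => Complex.exp_log (one_sub_ne (hfac1 z hz j hj))
    have p2 : ∀ j ∈ Finset.Icc (k + 1) N,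
        Complex.exp (Complex.log (1 - z / r j)) = 1 - z / r j :=
      fun j hj => Complex.exp_log (one_sub_ne (hfac2 z hz j hj))
    have p3 : ∀ j ∈ Finset.Icc (k + 1) N, Complex.exp (Complex.log (-r j)) = -r j :=
      fun j hj => Complex.exp_log (neg_ne_zero.mpr (hrne2 j hj))
    rw [Finset.prod_congr rfl p1, Finset.prod_congr rfl p2, Finset.prod_congr rfl p3]
    have e1 : (∏ j ∈ Finset.Icc 1 k, (1 - r j / z))
        = (∏ j ∈ Finset.Icc 1 k, (z - r j)) * (z⁻¹) ^ k := by
      have : ∀ j ∈ Finset.Icc 1 k, (1 - r j / z) = (z - r j) * z⁻¹ := by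
        intro j hj
        field_simp
      rw [Finset.prod_congr rfl this, Finset.prod_mul_distrib, Finset.prod_const,
        Nat.card_Icc]
      simp
    have e2 : (∏ j ∈ Finset.Icc (k + 1) N, (1 - z / r j))
          * (∏ j ∈ Finset.Icc (k + 1) N, (-r j))
        = ∏ j ∈ Finset.Icc (k + 1) N, (z - r j) := by
      rw [← Finset.prod_mul_distrib]
      refine Finset.prod_congr rfl fun j hj => ?_
      have hj' := hrne2 j hj
      field_simp
      ring
    have e3 : (∏ j ∈ Finset.Icc 1 k, (z - r j)) * (∏ j ∈ Finset.Icc (k + 1) N, (z - r j))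
        = ∏ j ∈ Finset.Icc 1 N, (z - r j) := by
      have i1 : Finset.Icc 1 k = Finset.Ioc 0 k := Finset.Icc_add_one_left_eq_Ioc 0 k
      have i2 : Finset.Icc (k + 1) N = Finset.Ioc k N := Finset.Icc_add_one_left_eq_Ioc k N
      have i3 : Finset.Icc 1 N = Finset.Ioc 0 N := Finset.Icc_add_one_left_eq_Ioc 0 N
      rw [i1, i2, i3]
      exact Finset.prod_Ioc_consecutive _ (Nat.zero_le k) hkN.le
    calc (∏ j ∈ Finset.Icc 1 k, (1 - r j / z))
          * (∏ j ∈ Finset.Icc (k + 1) N, (1 - z / r j))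
          * (∏ j ∈ Finset.Icc (k + 1) N, (-r j))
        = ((∏ j ∈ Finset.Icc 1 k, (z - r j)) * (∏ j ∈ Finset.Icc (k + 1) N, (z - r j)))
            * (z⁻¹) ^ k := by rw [mul_assoc, e2, e1]; ring
      _ = (∏ j ∈ Finset.Icc 1 N, (z - r j)) / z ^ k := by
            rw [e3, div_eq_mul_inv, inv_pow]
  -- continuity of h on the sphere
  have hh_cont : ContinuousOn h (sphere (0 : ℂ) ρ) := by
    rw [hhdef]
    refine ContinuousOn.add ?_ ?_ <;>
      refine continuousOn_finset_sum _ fun j hj => fun z hz => ContinuousAt.continuousWithinAt ?_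
    · exact ContinuousAt.clog
        (continuousAt_const.sub (continuousAt_const.div continuousAt_id (hz0 z hz)))
        (one_sub_slit (hfac1 z hz j hj))
    · exact ContinuousAt.clog
        (continuousAt_const.sub (continuousAt_id.div continuousAt_const (hrne2 j hj)))
        (one_sub_slit (hfac2 z hz j hj))
  have hg_cont : ContinuousOn g (sphere (0 : ℂ) ρ) :=
    hg.continuousOn.mono fun z hz => hsub z hz
  -- integer-valued difference
  have hint : ∀ z ∈ sphere (0 : ℂ) ρ, ∃ n : ℤ,
      g z = h z + c + n * (2 * Real.pi * I) := by
    intro z hz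
    have h1 := hgexp z (hsub z hz)
    have h2 := hexp z hz
    have h3 : Complex.exp (g z) = Complex.exp (h z + c) := by rw [h1, h2]
    rw [Complex.exp_eq_exp_iff_exists_int] at h3
    exact h3
  set q : ℂ → ℝ := fun z => ((g z - h z - c) / (2 * Real.pi * I)).re with hqdef
  have hqval : ∀ z ∈ sphere (0 : ℂ) ρ, ∀ n : ℤ,
      g z = h z + c + n * (2 * Real.pi * I) → q z = n := by
    intro z hz n hn
    rw [hqdef]
    simp only []
    rw [show g z - h z - c = n * (2 * Real.pi * I) by rw [hn]; ring,
      mul_div_cancel_right₀ _ Complex.two_pi_I_ne_zero]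
    simp
  have hqint : ∀ z ∈ sphere (0 : ℂ) ρ, ∃ n : ℤ, q z = n := by
    intro z hz
    obtain ⟨n, hn⟩ := hint z hz
    exact ⟨n, hqval z hz n hn⟩
  have hq_cont : ContinuousOn q (sphere (0 : ℂ) ρ) := by
    rw [hqdef]
    exact Complex.continuous_re.comp_continuousOn
      (((hg_cont.sub hh_cont).sub continuousOn_const).div_const _)
  have hpc : IsPreconnected (sphere (0 : ℂ) ρ) :=
    (isConnected_sphere (by rw [Complex.rank_real_complex]; exact Cardinal.one_lt_two) 0
      hρ0.le).isPreconnected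
  have hz₀mem : (ρ : ℂ) ∈ sphere (0 : ℂ) ρ := by
    rw [mem_sphere_zero_iff_norm]
    simp [abs_of_pos hρ0]
  obtain ⟨n₀, hn₀⟩ := hint _ hz₀mem
  have hgz : ∀ z ∈ sphere (0 : ℂ) ρ, g z = h z + c + n₀ * (2 * Real.pi * I) := by
    intro z hz
    obtain ⟨n, hn⟩ := hint z hz
    have hqq : q z = q (ρ : ℂ) := int_valued_const hpc hq_cont hqint hz hz₀mem
    have h1 : (n : ℝ) = (n₀ : ℝ) := by
      rw [← hqval z hz n hn, ← hqval _ hz₀mem n₀ hn₀]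
      exact hqq
    have : n = n₀ := by exact_mod_cast h1
    rw [hn, this]
  classical
  set C : ℂ := c + n₀ * (2 * Real.pi * I) with hCdef
  -- continuity / integrability of the pieces
  have hcont1 : ∀ j ∈ Finset.Icc 1 k,
      ContinuousOn (fun z => Complex.log (1 - r j / z) / z) (sphere (0 : ℂ) ρ) := by
    intro j hj z hz
    refine ContinuousAt.continuousWithinAt ?_
    exact (ContinuousAt.clog
      (continuousAt_const.sub (continuousAt_const.div continuousAt_id (hz0 z hz)))
      (one_sub_slit (hfac1 z hz j hj))).div continuousAt_id (hz0 z hz)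
  have hcont2 : ∀ j ∈ Finset.Icc (k + 1) N,
      ContinuousOn (fun z => Complex.log (1 - z / r j) / z) (sphere (0 : ℂ) ρ) := by
    intro j hj z hz
    refine ContinuousAt.continuousWithinAt ?_
    exact (ContinuousAt.clog
      (continuousAt_const.sub (continuousAt_id.div continuousAt_const (hrne2 j hj)))
      (one_sub_slit (hfac2 z hz j hj))).div continuousAt_id (hz0 z hz)
  have hint1 : ∀ j ∈ Finset.Icc 1 k,
      CircleIntegrable (fun z => Complex.log (1 - r j / z) / z) 0 ρ :=
    fun j hj => (hcont1 j hj).circleIntegrable hρ0.le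
  have hint2 : ∀ j ∈ Finset.Icc (k + 1) N,
      CircleIntegrable (fun z => Complex.log (1 - z / r j) / z) 0 ρ :=
    fun j hj => (hcont2 j hj).circleIntegrable hρ0.le
  have hcontC : ContinuousOn (fun z : ℂ => C / z) (sphere (0 : ℂ) ρ) := by
    intro z hz
    exact (continuousAt_const.div continuousAt_id (hz0 z hz)).continuousWithinAt
  have hintC : CircleIntegrable (fun z : ℂ => C / z) 0 ρ :=
    hcontC.circleIntegrable hρ0.le
  have hintS1 : CircleIntegrable
      (fun z => ∑ j ∈ Finset.Icc 1 k, Complex.log (1 - r j / z) / z) 0 ρ :=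
    (continuousOn_finset_sum _ hcont1).circleIntegrable hρ0.le
  have hintS2 : CircleIntegrable
      (fun z => ∑ j ∈ Finset.Icc (k + 1) N, Complex.log (1 - z / r j) / z) 0 ρ :=
    (continuousOn_finset_sum _ hcont2).circleIntegrable hρ0.le
  have hintS2C : CircleIntegrable
      (fun z => (∑ j ∈ Finset.Icc (k + 1) N, Complex.log (1 - z / r j) / z) + C / z) 0 ρ :=
    ((continuousOn_finset_sum _ hcont2).add hcontC).circleIntegrable hρ0.le
  -- computing the integral
  have keyint : (∮ z in C(0, ρ), g z / z) = C * (2 * Real.pi * I) := by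
    have e0 : (∮ z in C(0, ρ), g z / z)
        = ∮ z in C(0, ρ), ((∑ j ∈ Finset.Icc 1 k, Complex.log (1 - r j / z) / z)
            + ((∑ j ∈ Finset.Icc (k + 1) N, Complex.log (1 - z / r j) / z) + C / z)) := by
      refine circleIntegral.integral_congr hρ0.le fun z hz => ?_
      rw [hgz z hz, hhdef, hCdef]
      simp only [add_div, Finset.sum_div]
      ring
    rw [e0, circleIntegral_add' hintS1 hintS2C, circleIntegral_add' hintS2 hintC,
      circleIntegral_finset_sum _ _ hint1, circleIntegral_finset_sum _ _ hint2,
      circleIntegral_const_div hρ0]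
    have z1 : ∑ j ∈ Finset.Icc 1 k, (∮ z in C(0, ρ), Complex.log (1 - r j / z) / z) = 0 := by
      refine Finset.sum_eq_zero fun j hj => ?_
      obtain ⟨h1, h2⟩ := Finset.mem_Icc.mp hj
      exact mean_zero' hρ0 (hrne j h1 (h2.trans hkN.le))
        (lt_of_le_of_lt (hmono j k h1 h2 hkN.le) hρ1)
    have z2 : ∑ j ∈ Finset.Icc (k + 1) N,
        (∮ z in C(0, ρ), Complex.log (1 - z / r j) / z) = 0 := by
      refine Finset.sum_eq_zero fun j hj => ?_
      obtain ⟨h1, h2⟩ := Finset.mem_Icc.mp hj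
      exact mean_zero hρ0 (lt_of_lt_of_le hρ2 (hmono (k + 1) j (by omega) h1 h2))
    rw [z1, z2, zero_add, zero_add]
  have hmean : (1 / (2 * (Real.pi : ℂ) * Complex.I)) * (∮ z in C(0, ρ), g z / z) = C := by
    rw [keyint]
    rw [one_div, inv_mul_eq_div]
    exact mul_div_cancel_right₀ C Complex.two_pi_I_ne_zero
  rw [hmean]
  -- imaginary part arithmetic
  have hCim : C.im = (∑ j ∈ Finset.Icc (k + 1) N, Complex.arg (-r j)) + 2 * Real.pi * (n₀ : ℝ) := by
    rw [hCdef, hcdef]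
    rw [Complex.add_im, Complex.im_sum]
    simp only [Complex.log_im]
    congr 1
    simp [Complex.mul_im]
    ring
  have hargsum : ∃ M : ℤ, (∑ j ∈ Finset.Icc (k + 1) N, Complex.arg (-r j))
      = (∑ j ∈ Finset.Icc (k + 1) N, (Real.pi + (r j).arg)) + 2 * Real.pi * (M : ℝ) := by
    choose! mf hmf using fun j (hj : j ∈ Finset.Icc (k + 1) N) => arg_neg_eq (hrne2 j hj)
    refine ⟨∑ j ∈ Finset.Icc (k + 1) N, mf j, ?_⟩
    rw [Finset.sum_congr rfl hmf, Finset.sum_add_distrib]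
    push_cast
    rw [Finset.mul_sum]
  obtain ⟨M, hM⟩ := hargsum
  refine ⟨M + n₀, ?_⟩
  rw [hCim, hM]
  push_cast
  ring
end
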